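/- arXiv:1812.05905 — 2 statements merged into one kernel-verified Lean document; each statement's English description precedes it below -/
import Mathlib

section
/- Soft Policy Improvement: Let S, A be finite, γ ∈ [0,1), α > 0, and let Π be a set of full-support policies. Let π_old ∈ Π with soft Q-function Q^{π_old}, and suppose π_new ∈ Π minimizes over π' ∈ Π, for every state s, the KL divergence D_KL( π'(·|s) ‖ exp(Q^{π_old}(s,·)/α) / Z^{π_old}(s) ), where Z^{π_old}(s) = Σ_a exp(Q^{π_old}(s,a)/α). Then Q^{π_new}(s,a) ≥ Q^{π_old}(s,a) for all (s,a) ∈ S × A. -/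
/-- Soft policy improvement: if π_new minimizes, over the set Π of
full-support policies and for every state, the KL divergence to the Boltzmann
distribution exp(Q^{π_old}/α)/Z, then Q^{π_new} ≥ Q^{π_old} pointwise. -/
theorem soft_policy_improvement
    {S A : Type*} [Fintype S] [Fintype A] [Nonempty S] [Nonempty A]
    (rmin rmax : ℝ) (r : S → A → ℝ) (hr : ∀ s a, r s a ∈ Set.Icc rmin rmax)
    (p : S → A → S → ℝ) (hp0 : ∀ s a s', 0 ≤ p s a s') (hp1 : ∀ s a, ∑ s', p s a s' = 1)
    (γ : ℝ) (hγ0 : 0 ≤ γ) (hγ1 : γ < 1)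
    (α : ℝ) (hα : 0 < α)
    (Pi : Set (S → A → ℝ))
    (hPi : ∀ π' ∈ Pi, (∀ s a, 0 < π' s a) ∧ ∀ s, ∑ a, π' s a = 1)
    (πold πnew : S → A → ℝ) (hπold : πold ∈ Pi) (hπnew : πnew ∈ Pi)
    (Qold Qnew : S → A → ℝ)
    (hQold : ∀ s a, Qold s a = r s a + γ * ∑ s', p s a s' *
      (∑ a', πold s' a' * (Qold s' a' - α * Real.log (πold s' a'))))
    (hQnew : ∀ s a, Qnew s a = r s a + γ * ∑ s', p s a s' *
      (∑ a', πnew s' a' * (Qnew s' a' - α * Real.log (πnew s' a'))))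
    (hmin : ∀ π' ∈ Pi, ∀ s,
      ∑ a, πnew s a * (Real.log (πnew s a) -
          (Qold s a / α - Real.log (∑ a', Real.exp (Qold s a' / α))))
        ≤ ∑ a, π' s a * (Real.log (π' s a) -
          (Qold s a / α - Real.log (∑ a', Real.exp (Qold s a' / α))))) :
    ∀ s a, Qold s a ≤ Qnew s a := by
  obtain ⟨hnewpos, hnewsum⟩ := hPi πnew hπnew
  obtain ⟨holdpos, holdsum⟩ := hPi πold hπold
  -- Step 1: πnew improves the soft value evaluated at Qold
  have key : ∀ s, ∑ a, πold s a * (Qold s a - α * Real.log (πold s a))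
      ≤ ∑ a, πnew s a * (Qold s a - α * Real.log (πnew s a)) := by
    intro s
    have h := hmin πold hπold s
    set L := Real.log (∑ a', Real.exp (Qold s a' / α)) with hL
    have e1 : ∀ π : A → ℝ, ∑ a, π a * (Real.log (π a) - (Qold s a / α - L))
        = (∑ a, (π a * Real.log (π a) - π a * Qold s a / α)) + (∑ a, π a) * L := by
      intro π
      rw [Finset.sum_mul, ← Finset.sum_add_distrib]
      exact Finset.sum_congr rfl fun a _ => by ring
    rw [e1, e1, hnewsum, holdsum] at h
    have e2 : ∀ π : A → ℝ, ∑ a, π a * (Qold s a - α * Real.log (π a))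
        = -α * ∑ a, (π a * Real.log (π a) - π a * Qold s a / α) := by
      intro π
      rw [Finset.mul_sum]
      refine Finset.sum_congr rfl fun a _ => ?_
      field_simp
      ring
    rw [e2 (πold s), e2 (πnew s)]
    nlinarith [h]
  -- contraction argument
  have univne : (Finset.univ : Finset (S × A)).Nonempty := Finset.univ_nonempty
  set M := Finset.univ.sup' univne (fun q : S × A => Qold q.1 q.2 - Qnew q.1 q.2) with hMdef
  have hM : ∀ s a, Qold s a - Qnew s a ≤ M :=
    fun s a => Finset.le_sup' (f := fun q : S × A => Qold q.1 q.2 - Qnew q.1 q.2)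
      (Finset.mem_univ (s, a))
  have hbound : ∀ s', (∑ a', πold s' a' * (Qold s' a' - α * Real.log (πold s' a')))
      - (∑ a', πnew s' a' * (Qnew s' a' - α * Real.log (πnew s' a'))) ≤ M := by
    intro s'
    have h2 : ∑ a', πnew s' a' * (Qold s' a' - α * Real.log (πnew s' a'))
        - ∑ a', πnew s' a' * (Qnew s' a' - α * Real.log (πnew s' a'))
        = ∑ a', πnew s' a' * (Qold s' a' - Qnew s' a') := by
      rw [← Finset.sum_sub_distrib]
      exact Finset.sum_congr rfl fun a _ => by ring
    have h3 : ∑ a', πnew s' a' * (Qold s' a' - Qnew s' a') ≤ M := by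
      calc ∑ a', πnew s' a' * (Qold s' a' - Qnew s' a')
          ≤ ∑ a', πnew s' a' * M :=
            Finset.sum_le_sum fun a _ =>
              mul_le_mul_of_nonneg_left (hM s' a) (hnewpos s' a).le
        _ = M := by rw [← Finset.sum_mul, hnewsum, one_mul]
    linarith [key s']
  have hstep : ∀ s a, Qold s a - Qnew s a ≤ γ * M := by
    intro s a
    rw [hQold, hQnew]
    have hsum : ∑ s', p s a s' * (∑ a', πold s' a' * (Qold s' a' - α * Real.log (πold s' a')))
        - ∑ s', p s a s' * (∑ a', πnew s' a' * (Qnew s' a' - α * Real.log (πnew s' a')))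
        = ∑ s', p s a s' * ((∑ a', πold s' a' * (Qold s' a' - α * Real.log (πold s' a')))
            - (∑ a', πnew s' a' * (Qnew s' a' - α * Real.log (πnew s' a')))) := by
      rw [← Finset.sum_sub_distrib]
      exact Finset.sum_congr rfl fun s' _ => by ring
    have h4 : ∑ s', p s a s' * ((∑ a', πold s' a' * (Qold s' a' - α * Real.log (πold s' a')))
        - (∑ a', πnew s' a' * (Qnew s' a' - α * Real.log (πnew s' a')))) ≤ M := by
      calc _ ≤ ∑ s', p s a s' * M :=
            Finset.sum_le_sum fun s' _ =>
              mul_le_mul_of_nonneg_left (hbound s') (hp0 s a s')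
        _ = M := by rw [← Finset.sum_mul, hp1, one_mul]
    nlinarith [h4, hsum]
  obtain ⟨q, -, hq⟩ := Finset.exists_mem_eq_sup' univne (fun q : S × A => Qold q.1 q.2 - Qnew q.1 q.2)
  have hM0 : M ≤ 0 := by
    have h1 := hstep q.1 q.2
    nlinarith [hq.le, hq.ge]
  intro s a
  linarith [hM s a]
end

section
/- Soft Policy Iteration optimality: Let S, A be finite, r bounded, γ ∈ [0,1), α > 0, and let Π be the set of all full-support policies. Repeated application of soft policy evaluation and soft policy improvement starting from any π ∈ Π converges to a policy π* such that Q^{π*}(s,a) ≥ Q^{π}(s,a) for all π ∈ Π and all (s,a) ∈ S × A. -/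
open Finset

/-- Gibbs inequality: KL nonnegativity in the form ∑ π log(σ/π) ≤ 0. -/
lemma sp_gibbs {A : Type*} [Fintype A] (π σ : A → ℝ)
    (hπ : ∀ a, 0 < π a) (hσ : ∀ a, 0 < σ a)
    (hπ1 : ∑ a, π a = 1) (hσ1 : ∑ a, σ a = 1) :
    ∑ a, π a * Real.log (σ a / π a) ≤ 0 := by
  have h : ∀ a ∈ Finset.univ, π a * Real.log (σ a / π a) ≤ σ a - π a := by
    intro a _
    have h1 := Real.log_le_sub_one_of_pos (div_pos (hσ a) (hπ a))
    have h2 : π a * Real.log (σ a / π a) ≤ π a * (σ a / π a - 1) :=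
      mul_le_mul_of_nonneg_left h1 (hπ a).le
    have h3 : π a * (σ a / π a - 1) = σ a - π a := by
      rw [mul_sub, mul_div_cancel₀ _ (hπ a).ne', mul_one]
    linarith
  calc ∑ a, π a * Real.log (σ a / π a) ≤ ∑ a, (σ a - π a) := Finset.sum_le_sum h
    _ = 0 := by rw [Finset.sum_sub_distrib, hπ1, hσ1]; ring

/-- The Boltzmann policy maximizes entropy-regularized value. -/
lemma sp_boltzmann_max {A : Type*} [Fintype A] [Nonempty A] (α : ℝ) (hα : 0 < α)
    (x : A → ℝ) (π : A → ℝ) (hπ : ∀ a, 0 < π a) (hπ1 : ∑ a, π a = 1) :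
    ∑ a, π a * (x a - α * Real.log (π a)) ≤
      ∑ a, (Real.exp (x a / α) / ∑ a', Real.exp (x a' / α)) *
        (x a - α * Real.log (Real.exp (x a / α) / ∑ a', Real.exp (x a' / α))) := by
  set Z : ℝ := ∑ a', Real.exp (x a' / α) with hZ
  have hZpos : 0 < Z := Finset.sum_pos (fun a _ => Real.exp_pos _) univ_nonempty
  set σ : A → ℝ := fun a => Real.exp (x a / α) / Z with hσdef
  have hσpos : ∀ a, 0 < σ a := fun a => div_pos (Real.exp_pos _) hZpos
  have hσ1 : ∑ a, σ a = 1 := by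
    simp only [hσdef]
    rw [← Finset.sum_div]
    exact div_self hZpos.ne'
  have hlogσ : ∀ a, Real.log (σ a) = x a / α - Real.log Z := by
    intro a
    simp only [hσdef]
    rw [Real.log_div (Real.exp_pos _).ne' hZpos.ne', Real.log_exp]
  have hrhs : ∑ a, σ a * (x a - α * Real.log (σ a)) = α * Real.log Z := by
    have : ∀ a, σ a * (x a - α * Real.log (σ a)) = σ a * (α * Real.log Z) := by
      intro a; rw [hlogσ a]; field_simp; ring
    rw [Finset.sum_congr rfl (fun a _ => this a), ← Finset.sum_mul, hσ1, one_mul]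
  have hlhs : ∑ a, π a * (x a - α * Real.log (π a)) =
      α * (∑ a, π a * Real.log (σ a / π a)) + α * Real.log Z := by
    rw [Finset.mul_sum]
    have : ∀ a, π a * (x a - α * Real.log (π a)) =
        α * (π a * Real.log (σ a / π a)) + π a * (α * Real.log Z) := by
      intro a
      rw [Real.log_div (hσpos a).ne' (hπ a).ne', hlogσ a]
      field_simp; ring
    rw [Finset.sum_congr rfl (fun a _ => this a), Finset.sum_add_distrib,
      ← Finset.sum_mul, hπ1, one_mul]
  have hkl := sp_gibbs π σ hπ hσpos hπ1 hσ1
  have : α * (∑ a, π a * Real.log (σ a / π a)) ≤ 0 :=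
    mul_nonpos_of_nonneg_of_nonpos hα.le hkl
  rw [hlhs]
  show _ ≤ ∑ a, σ a * (x a - α * Real.log (σ a))
  rw [hrhs]; linarith

/-- Comparison lemma: if the value-difference is controlled by a convex combination of
Q-differences, then Q ≤ Qσ everywhere (contraction argument via the maximum). -/
lemma sp_cmp {S A : Type*} [Fintype S] [Fintype A] [Nonempty S] [Nonempty A]
    (p : S → A → S → ℝ) (hp0 : ∀ s a s', 0 ≤ p s a s') (hp1 : ∀ s a, ∑ s', p s a s' = 1)
    (γ : ℝ) (hγ0 : 0 ≤ γ) (hγ1 : γ < 1) (α : ℝ)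
    (r : S → A → ℝ)
    (π σ w : S → A → ℝ) (hw0 : ∀ s a, 0 ≤ w s a) (hw1 : ∀ s, ∑ a, w s a = 1)
    (Q Qσ : S → A → ℝ)
    (hQ : ∀ s a, Q s a = r s a + γ * ∑ s', p s a s' *
      (∑ a', π s' a' * (Q s' a' - α * Real.log (π s' a'))))
    (hQσ : ∀ s a, Qσ s a = r s a + γ * ∑ s', p s a s' *
      (∑ a', σ s' a' * (Qσ s' a' - α * Real.log (σ s' a'))))
    (hkey : ∀ s, (∑ a, π s a * (Q s a - α * Real.log (π s a))) -
        (∑ a, σ s a * (Qσ s a - α * Real.log (σ s a))) ≤ ∑ a, w s a * (Q s a - Qσ s a)) :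
    ∀ s a, Q s a ≤ Qσ s a := by
  have hne : (Finset.univ : Finset (S × A)).Nonempty := univ_nonempty
  set M : ℝ := Finset.univ.sup' hne (fun sa : S × A => Q sa.1 sa.2 - Qσ sa.1 sa.2) with hMdef
  have hM : ∀ s a, Q s a - Qσ s a ≤ M := fun s a =>
    Finset.le_sup' (f := fun sa : S × A => Q sa.1 sa.2 - Qσ sa.1 sa.2) (Finset.mem_univ (s, a))
  have hwM : ∀ s, ∑ a, w s a * (Q s a - Qσ s a) ≤ M := by
    intro s
    calc ∑ a, w s a * (Q s a - Qσ s a) ≤ ∑ a, w s a * M :=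
          Finset.sum_le_sum (fun a _ => mul_le_mul_of_nonneg_left (hM s a) (hw0 s a))
      _ = M := by rw [← Finset.sum_mul, hw1, one_mul]
  have hstep : ∀ s a, Q s a - Qσ s a ≤ γ * M := by
    intro s a
    have hdiff : Q s a - Qσ s a = γ * ∑ s', p s a s' *
        ((∑ a', π s' a' * (Q s' a' - α * Real.log (π s' a'))) -
         (∑ a', σ s' a' * (Qσ s' a' - α * Real.log (σ s' a')))) := by
      rw [hQ s a, hQσ s a]
      rw [show ∀ x y : ℝ, r s a + x - (r s a + y) = x - y from fun x y => by ring]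
      rw [← mul_sub, ← Finset.sum_sub_distrib]
      congr 1
      refine Finset.sum_congr rfl (fun s' _ => by ring)
    rw [hdiff]
    have hinner : ∀ s', p s a s' *
        ((∑ a', π s' a' * (Q s' a' - α * Real.log (π s' a'))) -
         (∑ a', σ s' a' * (Qσ s' a' - α * Real.log (σ s' a')))) ≤ p s a s' * M := by
      intro s'
      exact mul_le_mul_of_nonneg_left (le_trans (hkey s') (hwM s')) (hp0 s a s')
    calc γ * ∑ s', p s a s' * _ ≤ γ * ∑ s', p s a s' * M := by
          exact mul_le_mul_of_nonneg_left (Finset.sum_le_sum (fun s' _ => hinner s')) hγ0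
      _ = γ * M := by rw [← Finset.sum_mul, hp1, one_mul]
  have hMle : M ≤ γ * M := by
    obtain ⟨sa, -, hsa⟩ := Finset.exists_mem_eq_sup' hne
      (fun sa : S × A => Q sa.1 sa.2 - Qσ sa.1 sa.2)
    conv_lhs => rw [hMdef, hsa]
    exact hstep sa.1 sa.2
  have hM0 : M ≤ 0 := by nlinarith
  intro s a
  linarith [hM s a]

/-- The value of the Boltzmann policy equals the log-partition function. -/
lemma sp_boltzmann_value {A : Type*} [Fintype A] [Nonempty A] (α : ℝ) (hα : 0 < α)
    (x : A → ℝ) :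
    ∑ a, (Real.exp (x a / α) / ∑ a', Real.exp (x a' / α)) *
        (x a - α * Real.log (Real.exp (x a / α) / ∑ a', Real.exp (x a' / α)))
      = α * Real.log (∑ a', Real.exp (x a' / α)) := by
  set Z : ℝ := ∑ a', Real.exp (x a' / α) with hZ
  have hZpos : 0 < Z := Finset.sum_pos (fun a _ => Real.exp_pos _) univ_nonempty
  have hσ1 : ∑ a, Real.exp (x a / α) / Z = 1 := by
    rw [← Finset.sum_div]; exact div_self hZpos.ne'
  have hlogσ : ∀ a, Real.log (Real.exp (x a / α) / Z) = x a / α - Real.log Z := by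
    intro a
    rw [Real.log_div (Real.exp_pos _).ne' hZpos.ne', Real.log_exp]
  have : ∀ a, (Real.exp (x a / α) / Z) * (x a - α * Real.log (Real.exp (x a / α) / Z))
      = (Real.exp (x a / α) / Z) * (α * Real.log Z) := by
    intro a; rw [hlogσ a]; field_simp; ring
  rw [Finset.sum_congr rfl (fun a _ => this a), ← Finset.sum_mul, hσ1, one_mul]

open Filter

/-- Soft policy iteration (evaluation + Boltzmann improvement over the set of
all full-support policies) converges to a policy π* whose soft Q-function dominates that of
every full-support policy. -/
theorem soft_policy_iteration_optimality
    {S A : Type*} [Fintype S] [Fintype A] [Nonempty S] [Nonempty A]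
    (rmin rmax : ℝ) (r : S → A → ℝ) (hr : ∀ s a, r s a ∈ Set.Icc rmin rmax)
    (p : S → A → S → ℝ) (hp0 : ∀ s a s', 0 ≤ p s a s') (hp1 : ∀ s a, ∑ s', p s a s' = 1)
    (γ : ℝ) (hγ0 : 0 ≤ γ) (hγ1 : γ < 1)
    (α : ℝ) (hα : 0 < α)
    (π₀ : S → A → ℝ) (hπ₀0 : ∀ s a, 0 < π₀ s a) (hπ₀1 : ∀ s, ∑ a, π₀ s a = 1)
    (πseq : ℕ → S → A → ℝ) (Qseq : ℕ → S → A → ℝ)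
    (hstart : πseq 0 = π₀)
    (hpol : ∀ i, (∀ s a, 0 < πseq i s a) ∧ ∀ s, ∑ a, πseq i s a = 1)
    -- soft policy evaluation: Qseq i is the soft Q-function of πseq i
    (heval : ∀ i s a, Qseq i s a = r s a + γ * ∑ s', p s a s' *
      (∑ a', πseq i s' a' * (Qseq i s' a' - α * Real.log (πseq i s' a'))))
    -- soft policy improvement with Π = all full-support policies: Boltzmann policy
    (himprove : ∀ i s a, πseq (i + 1) s a =
      Real.exp (Qseq i s a / α) / ∑ a', Real.exp (Qseq i s a' / α)) :
    ∃ (πstar : S → A → ℝ) (Qstar : S → A → ℝ),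
      (∀ s a, 0 < πstar s a) ∧ (∀ s, ∑ a, πstar s a = 1) ∧
      (∀ s a, Qstar s a = r s a + γ * ∑ s', p s a s' *
        (∑ a', πstar s' a' * (Qstar s' a' - α * Real.log (πstar s' a')))) ∧
      (∀ s a, Filter.Tendsto (fun i => Qseq i s a) Filter.atTop (nhds (Qstar s a))) ∧
      (∀ π' : S → A → ℝ, (∀ s a, 0 < π' s a) → (∀ s, ∑ a, π' s a = 1) →
        ∀ Q' : S → A → ℝ,
          (∀ s a, Q' s a = r s a + γ * ∑ s', p s a s' *
            (∑ a', π' s' a' * (Q' s' a' - α * Real.log (π' s' a')))) →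
          ∀ s a, Q' s a ≤ Qstar s a) := by
  classical
  have hπ0 : ∀ i s a, 0 < πseq i s a := fun i => (hpol i).1
  have hπ1 : ∀ i s, ∑ a, πseq i s a = 1 := fun i => (hpol i).2
  -- Monotonicity of the Q-sequence
  have hmono : ∀ i s a, Qseq i s a ≤ Qseq (i + 1) s a := by
    intro i
    refine sp_cmp p hp0 hp1 γ hγ0 hγ1 α r (πseq i) (πseq (i + 1)) (πseq (i + 1))
      (fun s a => (hπ0 (i + 1) s a).le) (hπ1 (i + 1)) (Qseq i) (Qseq (i + 1))
      (heval i) (heval (i + 1)) ?_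
    intro s
    have hb := sp_boltzmann_max α hα (Qseq i s) (πseq i s) (fun a => hπ0 i s a) (hπ1 i s)
    have hbe : (∑ a, (Real.exp (Qseq i s a / α) / ∑ a', Real.exp (Qseq i s a' / α)) *
        (Qseq i s a - α * Real.log (Real.exp (Qseq i s a / α) /
          ∑ a', Real.exp (Qseq i s a' / α))))
        = ∑ a, πseq (i + 1) s a * (Qseq i s a - α * Real.log (πseq (i + 1) s a)) :=
      Finset.sum_congr rfl fun a _ => by rw [himprove i s a]
    rw [hbe] at hb
    have hsplit : (∑ a, πseq (i + 1) s a * (Qseq i s a - α * Real.log (πseq (i + 1) s a)))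
        - ∑ a, πseq (i + 1) s a * (Qseq (i + 1) s a - α * Real.log (πseq (i + 1) s a))
        = ∑ a, πseq (i + 1) s a * (Qseq i s a - Qseq (i + 1) s a) := by
      rw [← Finset.sum_sub_distrib]
      exact Finset.sum_congr rfl fun a _ => by ring
    linarith
  -- Uniform upper bound on the Q-sequence
  set n : ℝ := (Fintype.card A : ℝ) with hn
  have hn1 : (1 : ℝ) ≤ n := by rw [hn]; exact_mod_cast Fintype.card_pos (α := A)
  set B : ℝ := (rmax + γ * (α * Real.log n)) / (1 - γ) with hB
  have hbound : ∀ i s a, Qseq i s a ≤ B := by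
    intro i
    have hne : (Finset.univ : Finset (S × A)).Nonempty := univ_nonempty
    set M : ℝ := Finset.univ.sup' hne (fun sa : S × A => Qseq i sa.1 sa.2) with hMdef
    have hM : ∀ s a, Qseq i s a ≤ M := fun s a =>
      Finset.le_sup' (f := fun sa : S × A => Qseq i sa.1 sa.2) (Finset.mem_univ (s, a))
    -- each soft state value is at most M + α log n
    have hV : ∀ s', (∑ a', πseq i s' a' * (Qseq i s' a' - α * Real.log (πseq i s' a')))
        ≤ M + α * Real.log n := by
      intro s'
      have hb := (sp_boltzmann_max α hα (Qseq i s') (πseq i s')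
        (fun a => hπ0 i s' a) (hπ1 i s')).trans_eq (sp_boltzmann_value α hα (Qseq i s'))
      have hZle : (∑ a', Real.exp (Qseq i s' a' / α)) ≤ n * Real.exp (M / α) := by
        calc (∑ a', Real.exp (Qseq i s' a' / α)) ≤ ∑ _a' : A, Real.exp (M / α) :=
              Finset.sum_le_sum (fun a' _ =>
                Real.exp_le_exp.mpr (div_le_div_of_nonneg_right (hM s' a') hα.le))
          _ = n * Real.exp (M / α) := by
              rw [Finset.sum_const, Finset.card_univ, nsmul_eq_mul, hn]
      have hZpos : 0 < ∑ a', Real.exp (Qseq i s' a' / α) :=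
        Finset.sum_pos (fun a _ => Real.exp_pos _) univ_nonempty
      have hlog : Real.log (∑ a', Real.exp (Qseq i s' a' / α)) ≤ Real.log n + M / α := by
        calc Real.log (∑ a', Real.exp (Qseq i s' a' / α))
            ≤ Real.log (n * Real.exp (M / α)) := Real.log_le_log hZpos hZle
          _ = Real.log n + M / α := by
              rw [Real.log_mul (by linarith) (Real.exp_pos _).ne', Real.log_exp]
      have : α * Real.log (∑ a', Real.exp (Qseq i s' a' / α)) ≤ M + α * Real.log n := by
        have := mul_le_mul_of_nonneg_left hlog hα.le
        have hc : α * (Real.log n + M / α) = M + α * Real.log n := by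
          field_simp; ring
        linarith [hc ▸ this]
      linarith
    have hMB : M ≤ B := by
      obtain ⟨sa, -, hsa⟩ := Finset.exists_mem_eq_sup' hne
        (fun sa : S × A => Qseq i sa.1 sa.2)
      have h1 : Qseq i sa.1 sa.2 ≤ rmax + γ * (M + α * Real.log n) := by
        rw [heval i sa.1 sa.2]
        have h2 : (∑ s', p sa.1 sa.2 s' *
            (∑ a', πseq i s' a' * (Qseq i s' a' - α * Real.log (πseq i s' a'))))
            ≤ M + α * Real.log n := by
          calc _ ≤ ∑ s', p sa.1 sa.2 s' * (M + α * Real.log n) :=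
                Finset.sum_le_sum (fun s' _ =>
                  mul_le_mul_of_nonneg_left (hV s') (hp0 sa.1 sa.2 s'))
            _ = M + α * Real.log n := by rw [← Finset.sum_mul, hp1, one_mul]
        have := mul_le_mul_of_nonneg_left h2 hγ0
        have := (hr sa.1 sa.2).2
        linarith
      have hMeq : M = Qseq i sa.1 sa.2 := hsa
      have hlt : (0:ℝ) < 1 - γ := by linarith
      rw [hB, le_div_iff₀ hlt]
      linarith [h1, hMeq]
    exact fun s a => (hM s a).trans hMB
  -- Limit Q-function
  set Qstar : S → A → ℝ := fun s a => ⨆ i, Qseq i s a with hQstardef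
  have hmonof : ∀ s a, Monotone (fun i => Qseq i s a) := fun s a =>
    monotone_nat_of_le_succ (fun i => hmono i s a)
  have hbdd : ∀ s a, BddAbove (Set.range fun i => Qseq i s a) := fun s a =>
    ⟨B, by rintro _ ⟨i, rfl⟩; exact hbound i s a⟩
  have htend : ∀ s a, Tendsto (fun i => Qseq i s a) atTop (nhds (Qstar s a)) :=
    fun s a => tendsto_atTop_ciSup (hmonof s a) (hbdd s a)
  -- Limit policy
  set πstar : S → A → ℝ :=
    fun s a => Real.exp (Qstar s a / α) / ∑ a', Real.exp (Qstar s a' / α) with hπstardef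
  have hZpos : ∀ s, (0 : ℝ) < ∑ a', Real.exp (Qstar s a' / α) :=
    fun s => Finset.sum_pos (fun a _ => Real.exp_pos _) univ_nonempty
  have hπstar0 : ∀ s a, 0 < πstar s a := fun s a => div_pos (Real.exp_pos _) (hZpos s)
  have hπstar1 : ∀ s, ∑ a, πstar s a = 1 := by
    intro s
    rw [hπstardef, ← Finset.sum_div]
    exact div_self (hZpos s).ne'
  -- the policies converge to πstar
  have hπtend : ∀ s a, Tendsto (fun i => πseq i s a) atTop (nhds (πstar s a)) := by
    intro s a
    have h1 : Tendsto (fun i => Real.exp (Qseq i s a / α)) atTop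
        (nhds (Real.exp (Qstar s a / α))) :=
      (Real.continuous_exp.tendsto _).comp ((htend s a).div_const α)
    have h2 : Tendsto (fun i => ∑ a', Real.exp (Qseq i s a' / α)) atTop
        (nhds (∑ a', Real.exp (Qstar s a' / α))) :=
      tendsto_finset_sum _ (fun a' _ =>
        (Real.continuous_exp.tendsto _).comp ((htend s a').div_const α))
    have h3 : Tendsto (fun i => πseq (i + 1) s a) atTop (nhds (πstar s a)) := by
      have h4 := h1.div h2 (hZpos s).ne'
      have h5 : (fun i => πseq (i + 1) s a)
          = fun i => Real.exp (Qseq i s a / α) / ∑ a', Real.exp (Qseq i s a' / α) :=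
        funext fun i => himprove i s a
      rw [h5]
      exact h4
    exact (tendsto_add_atTop_iff_nat 1).mp h3
  -- convergence of soft state values
  have hVtend : ∀ s', Tendsto
      (fun i => ∑ a', πseq i s' a' * (Qseq i s' a' - α * Real.log (πseq i s' a'))) atTop
      (nhds (∑ a', πstar s' a' * (Qstar s' a' - α * Real.log (πstar s' a')))) := by
    intro s'
    refine tendsto_finset_sum _ (fun a' _ => ?_)
    have hlog : Tendsto (fun i => Real.log (πseq i s' a')) atTop
        (nhds (Real.log (πstar s' a'))) :=
      ((Real.continuousAt_log (hπstar0 s' a').ne').tendsto).comp (hπtend s' a')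
    exact (hπtend s' a').mul ((htend s' a').sub (hlog.const_mul α))
  -- Bellman equation for the limit
  have hbell : ∀ s a, Qstar s a = r s a + γ * ∑ s', p s a s' *
      (∑ a', πstar s' a' * (Qstar s' a' - α * Real.log (πstar s' a'))) := by
    intro s a
    refine tendsto_nhds_unique (htend s a) ?_
    have heq : (fun i => Qseq i s a) = fun i => r s a + γ * ∑ s', p s a s' *
        (∑ a', πseq i s' a' * (Qseq i s' a' - α * Real.log (πseq i s' a'))) :=
      funext fun i => heval i s a
    rw [heq]
    exact tendsto_const_nhds.add
      ((tendsto_finset_sum _ (fun s' _ => (hVtend s').const_mul (p s a s'))).const_mul γ)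
  refine ⟨πstar, Qstar, hπstar0, hπstar1, hbell, htend, ?_⟩
  -- Optimality
  intro π' hπ'0 hπ'1 Q' hQ'
  refine sp_cmp p hp0 hp1 γ hγ0 hγ1 α r π' πstar π'
    (fun s a => (hπ'0 s a).le) hπ'1 Q' Qstar hQ' hbell ?_
  intro s
  have hb := sp_boltzmann_max α hα (Qstar s) (π' s) (fun a => hπ'0 s a) (hπ'1 s)
  have hbe : (∑ a, (Real.exp (Qstar s a / α) / ∑ a', Real.exp (Qstar s a' / α)) *
      (Qstar s a - α * Real.log (Real.exp (Qstar s a / α) /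
        ∑ a', Real.exp (Qstar s a' / α))))
      = ∑ a, πstar s a * (Qstar s a - α * Real.log (πstar s a)) := rfl
  rw [hbe] at hb
  have hsplit : (∑ a, π' s a * (Q' s a - α * Real.log (π' s a)))
      - ∑ a, π' s a * (Qstar s a - α * Real.log (π' s a))
      = ∑ a, π' s a * (Q' s a - Qstar s a) := by
    rw [← Finset.sum_sub_distrib]
    exact Finset.sum_congr rfl fun a _ => by ring
  linarith
end
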